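/- Let ℓ be an odd prime and a, b, D, c3, c4 integers with gcd(c3, c4) = 1, a² − b²·D > 0, and suppose c3²·a + c4²·a·D + 2·c3·c4·b·D ≡ 0 (mod ℓ) and c3²·b + c4²·b·D + 2·c3·c4·a ≡ 0 (mod ℓ). Then ℓ ≤ max{a, D, a² − b²·D}. -/
import Mathlib
theorem stmt_3 (ℓ a b D c3 c4 : ℤ) (hℓ : Prime ℓ) (hodd : Odd ℓ)
    (hgcd : Int.gcd c3 c4 = 1)
    (ha : 0 < a) (hD : 0 < D) (hpos : 0 < a ^ 2 - b ^ 2 * D)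
    (h1 : c3 ^ 2 * a + c4 ^ 2 * a * D + 2 * c3 * c4 * b * D ≡ 0 [ZMOD ℓ])
    (h2 : c3 ^ 2 * b + c4 ^ 2 * b * D + 2 * c3 * c4 * a ≡ 0 [ZMOD ℓ]) :
    ℓ ≤ max a (max D (a ^ 2 - b ^ 2 * D)) := by
  have d1 : ℓ ∣ c3 ^ 2 * a + c4 ^ 2 * a * D + 2 * c3 * c4 * b * D :=
    (Int.modEq_zero_iff_dvd).mp h1
  have d2 : ℓ ∣ c3 ^ 2 * b + c4 ^ 2 * b * D + 2 * c3 * c4 * a :=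
    (Int.modEq_zero_iff_dvd).mp h2
  have hcop : IsCoprime c3 c4 := Int.isCoprime_iff_gcd_eq_one.mpr hgcd
  have hnot2 : ¬ ℓ ∣ 2 := by
    intro h
    have hnp : ℓ.natAbs.Prime := Int.prime_iff_natAbs_prime.mp hℓ
    have : ℓ.natAbs = 2 :=
      (Nat.prime_dvd_prime_iff_eq hnp Nat.prime_two).mp (Int.natAbs_dvd_natAbs.mpr h)
    have : (2 : ℤ) ∣ ℓ := by
      have := Int.natAbs_dvd.mpr (dvd_refl ℓ)
      rw [‹ℓ.natAbs = 2›] at this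
      exact_mod_cast this
    exact (Int.not_even_iff_odd.mpr hodd) (even_iff_two_dvd.mpr this)
  have key : ℓ ∣ 2 * (c3 * c4) * (a ^ 2 - b ^ 2 * D) := by
    have := dvd_sub (Dvd.dvd.mul_left d2 a) (Dvd.dvd.mul_left d1 b)
    have heq : a * (c3 ^ 2 * b + c4 ^ 2 * b * D + 2 * c3 * c4 * a)
        - b * (c3 ^ 2 * a + c4 ^ 2 * a * D + 2 * c3 * c4 * b * D)
        = 2 * (c3 * c4) * (a ^ 2 - b ^ 2 * D) := by ring
    rwa [heq] at this
  -- helper: if ℓ ∣ c3 or ℓ ∣ c4 conclude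
  have hc3case : ℓ ∣ c3 → ℓ ≤ max a (max D (a ^ 2 - b ^ 2 * D)) := by
    intro h3
    have hnc4 : ¬ ℓ ∣ c4 := fun h4 => hℓ.not_unit (hcop.isUnit_of_dvd' h3 h4)
    have : ℓ ∣ c4 ^ 2 * a * D := by
      have : ℓ ∣ (c3 ^ 2 * a + c4 ^ 2 * a * D + 2 * c3 * c4 * b * D)
          - c3 * (c3 * a + 2 * c4 * b * D) := dvd_sub d1 (h3.mul_right _)
      have heq : (c3 ^ 2 * a + c4 ^ 2 * a * D + 2 * c3 * c4 * b * D)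
          - c3 * (c3 * a + 2 * c4 * b * D) = c4 ^ 2 * a * D := by ring
      rwa [heq] at this
    rcases (hℓ.dvd_mul).mp this with h | h
    · rcases (hℓ.dvd_mul).mp h with h | h
      · exact absurd ((hℓ.dvd_of_dvd_pow h)) hnc4
      · exact le_trans (Int.le_of_dvd ha h) (le_max_left _ _)
    · exact le_trans (Int.le_of_dvd hD h) (le_trans (le_max_left _ _) (le_max_right _ _))
  have hc4case : ℓ ∣ c4 → ℓ ≤ max a (max D (a ^ 2 - b ^ 2 * D)) := by
    intro h4
    have : ℓ ∣ c3 ^ 2 * a := by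
      have : ℓ ∣ (c3 ^ 2 * a + c4 ^ 2 * a * D + 2 * c3 * c4 * b * D)
          - c4 * (c4 * a * D + 2 * c3 * b * D) := dvd_sub d1 (h4.mul_right _)
      have heq : (c3 ^ 2 * a + c4 ^ 2 * a * D + 2 * c3 * c4 * b * D)
          - c4 * (c4 * a * D + 2 * c3 * b * D) = c3 ^ 2 * a := by ring
      rwa [heq] at this
    rcases (hℓ.dvd_mul).mp this with h | h
    · exact absurd (hcop.isUnit_of_dvd' (hℓ.dvd_of_dvd_pow h) h4) hℓ.not_unit
    · exact le_trans (Int.le_of_dvd ha h) (le_max_left _ _)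
  rcases (hℓ.dvd_mul).mp key with h | h
  · rcases (hℓ.dvd_mul).mp h with h | h
    · exact absurd h hnot2
    · rcases (hℓ.dvd_mul).mp h with h | h
      · exact hc3case h
      · exact hc4case h
  · exact le_trans (Int.le_of_dvd hpos h) (le_trans (le_max_right _ _) (le_max_right _ _))
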